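/- Let Ta: ℂ^{N×N} → ℂ^N be the map with (Ta(X))_k = ∑ diag(X, k) + ∑ diag(conj(X), −k) for k = 0, …, N−1, where diag(X, k) denotes the k-th superdiagonal (sub-diagonal for negative k) of X and ∑ sums its entries. Then for any g₁, g₂ ∈ ℂ^N and X ∈ ℂ^{N×N}: ‖Ta(diag(g₁) X diag(g₂))‖ ≤ 2 ‖g₁‖ ‖g₂‖ ‖X‖_F. -/

import Mathlib

open Complex Matrix

/-- Euclidean norm of a complex vector. -/
noncomputable def evNorm {m : ℕ} (v : Fin m → ℂ) : ℝ :=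
  Real.sqrt (∑ i, (‖v i‖)^2)

/-- Frobenius norm of a matrix. -/
noncomputable def frobNorm {N : ℕ} (M : Matrix (Fin N) (Fin N) ℂ) : ℝ :=
  Real.sqrt (∑ m : Fin N, ∑ n : Fin N, (‖M m n‖)^2)

/-- The operator `Ta` summing the `k`-th superdiagonal of `X` and the `k`-th
subdiagonal of the conjugate of `X`. -/
noncomputable def Ta {N : ℕ} (X : Matrix (Fin N) (Fin N) ℂ) : Fin N → ℂ :=
  fun k => ∑ n : Fin N,
    if h : (n : ℕ) + (k : ℕ) < N then
      X n ⟨(n : ℕ) + k, h⟩ + starRingEnd ℂ (X ⟨(n : ℕ) + k, h⟩ n)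
    else 0

/-- Summing over superdiagonals is bounded by the full entrywise sum. -/
lemma diag_sum_le' {N : ℕ} (e : Fin N → Fin N → ℝ) (he : ∀ n m, 0 ≤ e n m) :
    ∑ k : Fin N, ∑ n : Fin N,
      (if h : (n : ℕ) + (k : ℕ) < N then e n ⟨(n : ℕ) + k, h⟩ else 0)
      ≤ ∑ n : Fin N, ∑ m : Fin N, e n m := by
  rw [Finset.sum_comm]
  refine Finset.sum_le_sum fun n _ => ?_
  classical
  set i : Fin N → Fin N := fun k =>
    if h : (n : ℕ) + (k : ℕ) < N then ⟨(n : ℕ) + k, h⟩ else n with hi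
  have h1 : ∀ k : Fin N,
      (if h : (n : ℕ) + (k : ℕ) < N then e n ⟨(n : ℕ) + k, h⟩ else 0)
      = if (n : ℕ) + (k : ℕ) < N then e n (i k) else 0 := by
    intro k
    by_cases h : (n : ℕ) + (k : ℕ) < N
    · simp [hi, h]
    · simp [h]
  simp_rw [h1]
  rw [← Finset.sum_filter]
  have hinj : ∀ a ∈ Finset.filter (fun k : Fin N => (n : ℕ) + (k : ℕ) < N) Finset.univ,
      ∀ b ∈ Finset.filter (fun k : Fin N => (n : ℕ) + (k : ℕ) < N) Finset.univ,
      i a = i b → a = b := by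
    intro a ha b hb hab
    simp only [Finset.mem_filter, Finset.mem_univ, true_and] at ha hb
    simp only [hi, dif_pos ha, dif_pos hb, Fin.mk.injEq] at hab
    exact Fin.ext (Nat.add_left_cancel hab)
  refine le_trans (le_of_eq (Finset.sum_image hinj).symm) ?_
  exact Finset.sum_le_sum_of_subset_of_nonneg (Finset.subset_univ _)
    (fun m _ _ => he n m)

/-- Cauchy–Schwarz along the `k`-th diagonal. -/
lemma cs_lemma {N : ℕ} (k : Fin N) (Y : Matrix (Fin N) (Fin N) ℂ) (a b : Fin N → ℂ) :
    (∑ n : Fin N, (if h : (n : ℕ) + (k : ℕ) < N then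
      ‖a n * Y n ⟨(n : ℕ) + k, h⟩ * b ⟨(n : ℕ) + k, h⟩‖ else 0))
    ≤ evNorm a * evNorm b * Real.sqrt (∑ n : Fin N, (if h : (n : ℕ) + (k : ℕ) < N then
      (‖Y n ⟨(n : ℕ) + k, h⟩‖)^2 else 0)) := by
  classical
  set S : ℝ := ∑ n : Fin N, (if h : (n : ℕ) + (k : ℕ) < N then
    (‖Y n ⟨(n : ℕ) + k, h⟩‖)^2 else 0) with hSval
  have hSnn : 0 ≤ S := Finset.sum_nonneg fun n _ => by
    by_cases h : (n : ℕ) + (k : ℕ) < N <;> simp [h, sq_nonneg]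
  set f : Fin N → ℝ := fun n => if h : (n : ℕ) + (k : ℕ) < N then
    ‖a n‖ * ‖b ⟨(n : ℕ) + k, h⟩‖ else 0 with hf
  set g : Fin N → ℝ := fun n => if h : (n : ℕ) + (k : ℕ) < N then
    ‖Y n ⟨(n : ℕ) + k, h⟩‖ else 0 with hg
  have hfg : ∀ n : Fin N, (if h : (n : ℕ) + (k : ℕ) < N then
      ‖a n * Y n ⟨(n : ℕ) + k, h⟩ * b ⟨(n : ℕ) + k, h⟩‖ else 0)
      = f n * g n := by
    intro n
    by_cases h : (n : ℕ) + (k : ℕ) < N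
    · simp only [hf, hg, dif_pos h, norm_mul]
      ring
    · simp [hf, hg, h]
  have hA : ∀ n, 0 ≤ f n * g n := by
    intro n
    rw [← hfg n]
    by_cases h : (n : ℕ) + (k : ℕ) < N
    · simp only [dif_pos h]
      positivity
    · simp [h]
  have hAnn : 0 ≤ ∑ n, f n * g n := Finset.sum_nonneg fun n _ => hA n
  have csq : (∑ n, f n * g n)^2 ≤ (∑ n, (f n)^2) * (∑ n, (g n)^2) :=
    Finset.sum_mul_sq_le_sq_mul_sq Finset.univ f g
  have hg2 : (∑ n, (g n)^2) = S := by
    rw [hSval]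
    refine Finset.sum_congr rfl fun n _ => ?_
    by_cases h : (n : ℕ) + (k : ℕ) < N <;> simp [hg, h]
  have hf2 : (∑ n, (f n)^2) ≤ (∑ i, (‖a i‖)^2) * (∑ i, (‖b i‖)^2) := by
    rw [Finset.sum_mul]
    refine Finset.sum_le_sum fun n _ => ?_
    by_cases h : (n : ℕ) + (k : ℕ) < N
    · simp only [hf, dif_pos h, mul_pow]
      refine mul_le_mul_of_nonneg_left ?_ (sq_nonneg _)
      exact Finset.single_le_sum (fun i _ => sq_nonneg (‖b i‖))
        (Finset.mem_univ _)
    · simp only [hf, dif_neg h]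
      rw [zero_pow (by norm_num : (2:ℕ) ≠ 0)]
      positivity
  have key : (∑ n, f n * g n)^2
      ≤ ((∑ i, (‖a i‖)^2) * (∑ i, (‖b i‖)^2)) * S := by
    refine le_trans csq ?_
    rw [hg2]
    exact mul_le_mul_of_nonneg_right hf2 hSnn
  calc (∑ n : Fin N, (if h : (n : ℕ) + (k : ℕ) < N then
      ‖a n * Y n ⟨(n : ℕ) + k, h⟩ * b ⟨(n : ℕ) + k, h⟩‖ else 0))
      = ∑ n, f n * g n := Finset.sum_congr rfl fun n _ => hfg n
    _ = Real.sqrt ((∑ n, f n * g n)^2) := (Real.sqrt_sq hAnn).symm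
    _ ≤ Real.sqrt (((∑ i, (‖a i‖)^2) * (∑ i, (‖b i‖)^2)) * S) :=
        Real.sqrt_le_sqrt key
    _ = evNorm a * evNorm b * Real.sqrt S := by
        rw [Real.sqrt_mul (mul_nonneg (Finset.sum_nonneg fun i _ => sq_nonneg _)
          (Finset.sum_nonneg fun i _ => sq_nonneg _)),
          Real.sqrt_mul (Finset.sum_nonneg fun i _ => sq_nonneg _)]
        rfl

/-- Per-component bound on `Ta (diagonal g₁ * X * diagonal g₂)`. -/
lemma perk_lemma {N : ℕ} (g₁ g₂ : Fin N → ℂ) (X : Matrix (Fin N) (Fin N) ℂ) (k : Fin N) :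
    ‖Ta (Matrix.diagonal g₁ * X * Matrix.diagonal g₂) k‖ ≤
      evNorm g₁ * evNorm g₂ * Real.sqrt (∑ n : Fin N, (if h : (n : ℕ) + (k : ℕ) < N then
        (‖X n ⟨(n : ℕ) + k, h⟩‖)^2 else 0))
      + evNorm g₁ * evNorm g₂ * Real.sqrt (∑ n : Fin N, (if h : (n : ℕ) + (k : ℕ) < N then
        (‖X ⟨(n : ℕ) + k, h⟩ n‖)^2 else 0)) := by
  classical
  have hM : ∀ a b, (Matrix.diagonal g₁ * X * Matrix.diagonal g₂) a b = g₁ a * X a b * g₂ b := by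
    intro a b
    rw [Matrix.mul_diagonal, Matrix.diagonal_mul]
  have step1 : ‖Ta (Matrix.diagonal g₁ * X * Matrix.diagonal g₂) k‖ ≤
      (∑ n : Fin N, (if h : (n : ℕ) + (k : ℕ) < N then
        ‖g₁ n * X n ⟨(n : ℕ) + k, h⟩ * g₂ ⟨(n : ℕ) + k, h⟩‖ else 0))
      + (∑ n : Fin N, (if h : (n : ℕ) + (k : ℕ) < N then
        ‖g₂ n * X ⟨(n : ℕ) + k, h⟩ n * g₁ ⟨(n : ℕ) + k, h⟩‖ else 0)) := by
    rw [Ta, ← Finset.sum_add_distrib]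
    refine le_trans (norm_sum_le _ _) (Finset.sum_le_sum fun n _ => ?_)
    by_cases h : (n : ℕ) + (k : ℕ) < N
    · simp only [dif_pos h]
      refine le_trans (norm_add_le _ _) ?_
      rw [Complex.norm_conj, hM, hM]
      have : g₁ ⟨(n : ℕ) + k, h⟩ * X ⟨(n : ℕ) + k, h⟩ n * g₂ n
          = g₂ n * X ⟨(n : ℕ) + k, h⟩ n * g₁ ⟨(n : ℕ) + k, h⟩ := by ring
      rw [this]
    · simp [h]
  refine le_trans step1 (add_le_add ?_ ?_)
  · exact cs_lemma k X g₁ g₂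
  · refine le_trans (cs_lemma k (fun n m => X m n) g₂ g₁) (le_of_eq ?_)
    ring

theorem stmt18 {N : ℕ} (g₁ g₂ : Fin N → ℂ) (X : Matrix (Fin N) (Fin N) ℂ) :
    evNorm (Ta (Matrix.diagonal g₁ * X * Matrix.diagonal g₂)) ≤
      2 * evNorm g₁ * evNorm g₂ * frobNorm X := by
  classical
  set G : ℝ := evNorm g₁ * evNorm g₂ with hG
  have hGnn : 0 ≤ G := mul_nonneg (Real.sqrt_nonneg _) (Real.sqrt_nonneg _)
  set S1 : Fin N → ℝ := fun k => ∑ n : Fin N,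
    (if h : (n : ℕ) + (k : ℕ) < N then (‖X n ⟨(n : ℕ) + k, h⟩‖)^2 else 0) with hS1
  set S2 : Fin N → ℝ := fun k => ∑ n : Fin N,
    (if h : (n : ℕ) + (k : ℕ) < N then (‖X ⟨(n : ℕ) + k, h⟩ n‖)^2 else 0) with hS2
  have hS1nn : ∀ k, 0 ≤ S1 k := fun k => Finset.sum_nonneg fun n _ => by
    by_cases h : (n : ℕ) + (k : ℕ) < N <;> simp [h, sq_nonneg]
  have hS2nn : ∀ k, 0 ≤ S2 k := fun k => Finset.sum_nonneg fun n _ => by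
    by_cases h : (n : ℕ) + (k : ℕ) < N <;> simp [h, sq_nonneg]
  have perk : ∀ k : Fin N,
      ‖Ta (Matrix.diagonal g₁ * X * Matrix.diagonal g₂) k‖
        ≤ G * Real.sqrt (S1 k) + G * Real.sqrt (S2 k) :=
    fun k => perk_lemma g₁ g₂ X k
  set u : EuclideanSpace ℝ (Fin N) := WithLp.toLp 2 (fun k => G * Real.sqrt (S1 k)) with hu
  set v : EuclideanSpace ℝ (Fin N) := WithLp.toLp 2 (fun k => G * Real.sqrt (S2 k)) with hv
  have hunorm : ‖u‖ = G * Real.sqrt (∑ k, S1 k) := by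
    rw [EuclideanSpace.norm_eq]
    have : ∀ k : Fin N, ‖u k‖^2 = G^2 * S1 k := by
      intro k
      rw [Real.norm_eq_abs, _root_.sq_abs, hu]
      simp only
      rw [mul_pow, Real.sq_sqrt (hS1nn k)]
    simp_rw [this]
    rw [← Finset.mul_sum, Real.sqrt_mul (sq_nonneg G), Real.sqrt_sq hGnn]
  have hvnorm : ‖v‖ = G * Real.sqrt (∑ k, S2 k) := by
    rw [EuclideanSpace.norm_eq]
    have : ∀ k : Fin N, ‖v k‖^2 = G^2 * S2 k := by
      intro k
      rw [Real.norm_eq_abs, _root_.sq_abs, hv]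
      simp only
      rw [mul_pow, Real.sq_sqrt (hS2nn k)]
    simp_rw [this]
    rw [← Finset.mul_sum, Real.sqrt_mul (sq_nonneg G), Real.sqrt_sq hGnn]
  have hmain : evNorm (Ta (Matrix.diagonal g₁ * X * Matrix.diagonal g₂)) ≤ ‖u + v‖ := by
    rw [evNorm, EuclideanSpace.norm_eq]
    refine Real.sqrt_le_sqrt (Finset.sum_le_sum fun k _ => ?_)
    have h1 : ‖(u + v) k‖ = G * Real.sqrt (S1 k) + G * Real.sqrt (S2 k) := by
      have : (u + v) k = G * Real.sqrt (S1 k) + G * Real.sqrt (S2 k) := rfl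
      rw [this, Real.norm_eq_abs, _root_.abs_of_nonneg]
      positivity
    rw [h1]
    exact pow_le_pow_left₀ (norm_nonneg _) (perk k) 2
  have hsum1 : Real.sqrt (∑ k, S1 k) ≤ frobNorm X := by
    rw [frobNorm]
    refine Real.sqrt_le_sqrt ?_
    exact diag_sum_le' (fun n m => (‖X n m‖)^2) (fun n m => sq_nonneg _)
  have hsum2 : Real.sqrt (∑ k, S2 k) ≤ frobNorm X := by
    rw [frobNorm]
    refine Real.sqrt_le_sqrt ?_
    exact le_trans
      (diag_sum_le' (fun n m => (‖X m n‖)^2) (fun n m => sq_nonneg _))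
      (le_of_eq Finset.sum_comm)
  have final : evNorm (Ta (Matrix.diagonal g₁ * X * Matrix.diagonal g₂))
      ≤ G * frobNorm X + G * frobNorm X := by
    refine le_trans hmain (le_trans (norm_add_le u v) ?_)
    rw [hunorm, hvnorm]
    exact add_le_add (mul_le_mul_of_nonneg_left hsum1 hGnn)
      (mul_le_mul_of_nonneg_left hsum2 hGnn)
  calc evNorm (Ta (Matrix.diagonal g₁ * X * Matrix.diagonal g₂))
      ≤ G * frobNorm X + G * frobNorm X := final
    _ = 2 * evNorm g₁ * evNorm g₂ * frobNorm X := by rw [hG]; ring
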